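/- arXiv:2308.13282 — 4 statements merged into one kernel-verified Lean document; each statement's English description precedes it below -/
import Mathlib

section
/- Let n, m, k be natural numbers, H an n×n real symmetric positive-definite matrix, A an m×n real matrix, J a k×n real matrix with full row rank (rank J = k), and μ > 0 a real number. Then the (n+m+k)×(n+m+k) block matrix K(H,A,J,μ) = [[H, Aᵀ, Jᵀ], [A, −μ⁻¹ I_m, 0], [J, 0, 0]] is invertible. -/
open Matrix

/-- The block KKT matrix `K(H,A,J,μ) = [[H, Aᵀ, Jᵀ], [A, −μ⁻¹ I_m, 0], [J, 0, 0]]`. -/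
noncomputable def kktMatrix {n m k : ℕ}
    (H : Matrix (Fin n) (Fin n) ℝ) (A : Matrix (Fin m) (Fin n) ℝ)
    (J : Matrix (Fin k) (Fin n) ℝ) (μ : ℝ) :
    Matrix (Fin n ⊕ (Fin m ⊕ Fin k)) (Fin n ⊕ (Fin m ⊕ Fin k)) ℝ :=
  Matrix.fromBlocks H (Matrix.fromCols Aᵀ Jᵀ) (Matrix.fromRows A J)
    (Matrix.fromBlocks (-μ⁻¹ • (1 : Matrix (Fin m) (Fin m) ℝ)) 0 0 0)

/-- Full row rank implies the transpose has trivial kernel. -/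
lemma transpose_mulVec_injective {n k : ℕ} (J : Matrix (Fin k) (Fin n) ℝ)
    (hJ : J.rank = k) (c : Fin k → ℝ) (hc : Jᵀ *ᵥ c = 0) : c = 0 := by
  have hrank : Jᵀ.rank = k := by rw [Matrix.rank_transpose]; exact hJ
  have hk : LinearMap.ker (Jᵀ.mulVecLin) = ⊥ := by
    have h1 := LinearMap.finrank_range_add_finrank_ker (Jᵀ.mulVecLin)
    rw [Module.finrank_fintype_fun_eq_card, Fintype.card_fin] at h1
    have h2 : Module.finrank ℝ (LinearMap.range Jᵀ.mulVecLin) = k := hrank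
    have h3 : Module.finrank ℝ (LinearMap.ker Jᵀ.mulVecLin) = 0 := by omega
    exact Submodule.finrank_eq_zero.mp h3
  have : c ∈ LinearMap.ker (Jᵀ.mulVecLin) := hc
  rw [hk] at this
  exact this

/-- If `H` is symmetric positive definite, `J` has full row rank and `μ > 0`,
then the KKT block matrix is invertible. -/
theorem kktMatrix_isUnit {n m k : ℕ}
    (H : Matrix (Fin n) (Fin n) ℝ) (hH : H.PosDef)
    (A : Matrix (Fin m) (Fin n) ℝ)
    (J : Matrix (Fin k) (Fin n) ℝ) (hJ : J.rank = k)
    (μ : ℝ) (hμ : 0 < μ) :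
    IsUnit (kktMatrix H A J μ) := by
  rw [← Matrix.mulVec_injective_iff_isUnit]
  rw [show (kktMatrix H A J μ).mulVec = (kktMatrix H A J μ).mulVecLin from rfl]
  rw [← LinearMap.ker_eq_bot, Matrix.ker_mulVecLin_eq_bot_iff]
  intro v hv
  set p : Fin n → ℝ := v ∘ Sum.inl with hp
  set l : Fin m → ℝ := v ∘ Sum.inr ∘ Sum.inl with hl
  set c : Fin k → ℝ := v ∘ Sum.inr ∘ Sum.inr with hcdef
  have hv' : v = Sum.elim p (Sum.elim l c) := by
    funext x; rcases x with x | (x | x) <;> rfl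
  rw [hv'] at hv
  rw [kktMatrix, Matrix.fromBlocks_mulVec] at hv
  simp only [Sum.elim_comp_inl, Sum.elim_comp_inr] at hv
  rw [Matrix.fromBlocks_mulVec, Matrix.fromCols_mulVec_sumElim,
    Matrix.fromRows_mulVec] at hv
  simp only [Sum.elim_comp_inl, Sum.elim_comp_inr] at hv
  have e1 : H *ᵥ p + (Aᵀ *ᵥ l + Jᵀ *ᵥ c) = 0 := by
    funext i; exact congrFun hv (Sum.inl i)
  have e2 : A *ᵥ p + ((-μ⁻¹ • (1 : Matrix (Fin m) (Fin m) ℝ)) *ᵥ l + 0 *ᵥ c) = 0 := by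
    funext i; exact congrFun hv (Sum.inr (Sum.inl i))
  have e3 : J *ᵥ p + (0 *ᵥ l + 0 *ᵥ c) = 0 := by
    funext i; exact congrFun hv (Sum.inr (Sum.inr i))
  simp only [Matrix.zero_mulVec, add_zero, zero_add, Matrix.smul_mulVec,
    Matrix.one_mulVec] at e2 e3
  -- e2 : A *ᵥ p + (-μ⁻¹) • l = 0, e3 : J *ᵥ p = 0
  have hAp : A *ᵥ p = μ⁻¹ • l := by
    have := congrArg (· + μ⁻¹ • l) e2
    simpa [neg_smul, add_assoc] using this
  -- dot product with p
  have key : p ⬝ᵥ (H *ᵥ p) + μ⁻¹ * (l ⬝ᵥ l) = 0 := by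
    have := congrArg (fun w => p ⬝ᵥ w) e1
    simp only [dotProduct_add, dotProduct_zero] at this
    have h2 : p ⬝ᵥ (Aᵀ *ᵥ l) = μ⁻¹ * (l ⬝ᵥ l) := by
      rw [Matrix.dotProduct_mulVec, Matrix.vecMul_transpose, hAp]
      simp [smul_eq_mul, smul_dotProduct]
    have h3 : p ⬝ᵥ (Jᵀ *ᵥ c) = 0 := by
      rw [Matrix.dotProduct_mulVec, Matrix.vecMul_transpose, e3]
      simp
    rw [h2, h3, add_zero] at this
    linarith
  have hHnn : 0 ≤ p ⬝ᵥ (H *ᵥ p) := by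
    rcases eq_or_ne p 0 with h | h
    · simp [h]
    · have := hH.dotProduct_mulVec_pos h
      simpa using this.le
  have hlnn : 0 ≤ μ⁻¹ * (l ⬝ᵥ l) :=
    mul_nonneg (inv_nonneg.mpr hμ.le) (Finset.sum_nonneg fun i _ => mul_self_nonneg (l i))
  have hH0 : p ⬝ᵥ (H *ᵥ p) = 0 := by linarith
  have hp0 : p = 0 := by
    by_contra h
    have hpos : 0 < p ⬝ᵥ (H *ᵥ p) := by simpa using hH.dotProduct_mulVec_pos h
    linarith
  have hl0 : l = 0 := by
    have : μ⁻¹ * (l ⬝ᵥ l) = 0 := by linarith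
    have hll : l ⬝ᵥ l = 0 := by
      have hμne : μ⁻¹ ≠ 0 := inv_ne_zero hμ.ne'
      exact (mul_eq_zero.mp this).resolve_left hμne
    exact dotProduct_self_eq_zero.mp hll
  have hc0 : c = 0 := by
    apply transpose_mulVec_injective J hJ
    have := e1
    rw [hp0, hl0] at this
    simpa using this
  rw [hv', hp0, hl0, hc0]
  funext x; rcases x with x | (x | x) <;> simp
end

section
/- Let H be an n×n real symmetric positive-definite matrix, A an m×n real matrix, J a k×n real matrix with full row rank (rank J = k), μ > 0, and r ∈ ℝᵏ. Set M = (H + μ AᵀA)⁻¹. Then the block linear system H·Δp + Aᵀ·Δλ + Jᵀ·Δκ = 0, A·Δp − μ⁻¹·Δλ = 0, J·Δp = −r has a unique solution (Δp, Δλ, Δκ) ∈ ℝⁿ × ℝᵐ × ℝᵏ, given explicitly by Δκ = (J M Jᵀ)⁻¹ r, Δp = −M Jᵀ (J M Jᵀ)⁻¹ r, and Δλ = −μ A M Jᵀ (J M Jᵀ)⁻¹ r. -/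
open Matrix

lemma soc_aux_inj {n k : ℕ} (J : Matrix (Fin k) (Fin n) ℝ) (hJ : J.rank = k) :
    Function.Injective (Jᵀ.mulVec) := by
  have h1 : Jᵀ.rank = k := by rw [Matrix.rank_transpose]; exact hJ
  have h2 := LinearMap.finrank_range_add_finrank_ker (Jᵀ.mulVecLin)
  rw [show Module.finrank ℝ (LinearMap.range Jᵀ.mulVecLin) = Jᵀ.rank from rfl, h1] at h2
  have h3 : Module.finrank ℝ (Fin k → ℝ) = k := by simp
  rw [h3] at h2
  have h4 : Module.finrank ℝ (LinearMap.ker Jᵀ.mulVecLin) = 0 := by omega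
  have h5 : LinearMap.ker Jᵀ.mulVecLin = ⊥ := Submodule.finrank_eq_zero.mp h4
  exact LinearMap.ker_eq_bot.mp h5

lemma soc_aux_posdef {n k : ℕ} (M : Matrix (Fin n) (Fin n) ℝ) (hM : M.PosDef)
    (J : Matrix (Fin k) (Fin n) ℝ) (hJ : J.rank = k) :
    (J * M * Jᵀ).PosDef := by
  refine Matrix.posDef_iff_dotProduct_mulVec.mpr ⟨?_, fun x hx => ?_⟩
  · have := (hM.posSemidef.mul_mul_conjTranspose_same J).isHermitian
    simpa [Matrix.conjTranspose_eq_transpose_of_trivial] using this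
  · have hz : Jᵀ.mulVec x ≠ 0 := fun h => hx (soc_aux_inj J hJ (by simpa using h))
    have h6 := (Matrix.posDef_iff_dotProduct_mulVec.mp hM).2 (x := Jᵀ.mulVec x) hz
    have e : x ⬝ᵥ ((J * M * Jᵀ) *ᵥ x) = (Jᵀ *ᵥ x) ⬝ᵥ (M *ᵥ (Jᵀ *ᵥ x)) := by
      rw [← Matrix.mulVec_mulVec, ← Matrix.mulVec_mulVec, Matrix.dotProduct_mulVec,
        ← Matrix.mulVec_transpose]
    simpa [star_trivial, e] using h6

/-- The block linear system `H Δp + Aᵀ Δl + Jᵀ Δκ = 0`, `A Δp − μ⁻¹ Δl = 0`,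
`J Δp = −r` has a unique solution, given explicitly by
`Δκ = (J M Jᵀ)⁻¹ r`, `Δp = −M Jᵀ (J M Jᵀ)⁻¹ r`, `Δl = −μ A M Jᵀ (J M Jᵀ)⁻¹ r`,
where `M = (H + μ AᵀA)⁻¹`. -/
theorem soc_step_unique_solution {n m k : ℕ}
    (H : Matrix (Fin n) (Fin n) ℝ) (hH : H.PosDef)
    (A : Matrix (Fin m) (Fin n) ℝ)
    (J : Matrix (Fin k) (Fin n) ℝ) (hJ : J.rank = k)
    (μ : ℝ) (hμ : 0 < μ) (r : Fin k → ℝ) :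
    let M := (H + μ • (Aᵀ * A))⁻¹
    let Δκ : Fin k → ℝ := ((J * M * Jᵀ)⁻¹).mulVec r
    let Δp : Fin n → ℝ := -((M * Jᵀ * (J * M * Jᵀ)⁻¹).mulVec r)
    let Δl : Fin m → ℝ := -(μ • ((A * M * Jᵀ * (J * M * Jᵀ)⁻¹).mulVec r))
    (H.mulVec Δp + Aᵀ.mulVec Δl + Jᵀ.mulVec Δκ = 0 ∧
      A.mulVec Δp - μ⁻¹ • Δl = 0 ∧
      J.mulVec Δp = -r) ∧
    ∀ (p : Fin n → ℝ) (l : Fin m → ℝ) (c : Fin k → ℝ),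
      H.mulVec p + Aᵀ.mulVec l + Jᵀ.mulVec c = 0 →
      A.mulVec p - μ⁻¹ • l = 0 →
      J.mulVec p = -r →
      p = Δp ∧ l = Δl ∧ c = Δκ := by
  intro M Δκ Δp Δl
  have hAtA : (μ • (Aᵀ * A)).PosSemidef := by
    refine Matrix.posSemidef_iff_dotProduct_mulVec.mpr ⟨?_, fun x => ?_⟩
    · have h := (Matrix.posSemidef_conjTranspose_mul_self A).isHermitian
      simp only [Matrix.conjTranspose_eq_transpose_of_trivial] at h
      show (μ • (Aᵀ * A))ᴴ = μ • (Aᵀ * A)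
      rw [Matrix.conjTranspose_smul, star_trivial]
      exact congrArg (μ • ·) h
    · have h := (Matrix.posSemidef_iff_dotProduct_mulVec.mp (Matrix.posSemidef_conjTranspose_mul_self A)).2 x
      simp only [Matrix.conjTranspose_eq_transpose_of_trivial] at h
      simpa [Matrix.smul_mulVec, dotProduct_smul] using
        mul_nonneg hμ.le h
  have hS : (H + μ • (Aᵀ * A)).PosDef := hH.add_posSemidef hAtA
  have hSu : IsUnit (H + μ • (Aᵀ * A)).det := hS.det_pos.ne'.isUnit
  have hSM : (H + μ • (Aᵀ * A)) * M = 1 := Matrix.mul_nonsing_inv _ hSu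
  have hMS : M * (H + μ • (Aᵀ * A)) = 1 := Matrix.nonsing_inv_mul _ hSu
  have hMpd : M.PosDef := hS.inv
  have hG : (J * M * Jᵀ).PosDef := soc_aux_posdef M hMpd J hJ
  have hGu : IsUnit (J * M * Jᵀ).det := hG.det_pos.ne'.isUnit
  have hGG : (J * M * Jᵀ) * (J * M * Jᵀ)⁻¹ = 1 := Matrix.mul_nonsing_inv _ hGu
  have key1 : (H + μ • (Aᵀ * A)) * (M * Jᵀ * (J * M * Jᵀ)⁻¹) = Jᵀ * (J * M * Jᵀ)⁻¹ := by
    rw [← Matrix.mul_assoc, ← Matrix.mul_assoc, hSM, Matrix.one_mul]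
  have key2 : J * (M * Jᵀ * (J * M * Jᵀ)⁻¹) = 1 := by
    rw [← Matrix.mul_assoc, ← Matrix.mul_assoc, hGG]
  constructor
  · refine ⟨?_, ?_, ?_⟩
    · show H.mulVec Δp + Aᵀ.mulVec Δl + Jᵀ.mulVec Δκ = 0
      have hexp : H.mulVec Δp + Aᵀ.mulVec Δl =
          -(((H + μ • (Aᵀ * A)) * (M * Jᵀ * (J * M * Jᵀ)⁻¹)).mulVec r) := by
        show H.mulVec (-((M * Jᵀ * (J * M * Jᵀ)⁻¹).mulVec r)) +
            Aᵀ.mulVec (-(μ • ((A * M * Jᵀ * (J * M * Jᵀ)⁻¹).mulVec r))) = _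
        simp only [Matrix.mulVec_neg, Matrix.mulVec_smul, Matrix.mulVec_mulVec,
          Matrix.add_mul, Matrix.smul_mul, Matrix.add_mulVec, Matrix.smul_mulVec,
          Matrix.mul_assoc, neg_add]
      rw [hexp]
      show _ + Jᵀ.mulVec (((J * M * Jᵀ)⁻¹).mulVec r) = 0
      rw [key1, Matrix.mulVec_mulVec]
      simp
    · show A.mulVec (-((M * Jᵀ * (J * M * Jᵀ)⁻¹).mulVec r)) -
        μ⁻¹ • (-(μ • ((A * M * Jᵀ * (J * M * Jᵀ)⁻¹).mulVec r))) = 0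
      simp only [Matrix.mulVec_neg, Matrix.mulVec_mulVec, smul_neg, smul_smul,
        inv_mul_cancel₀ hμ.ne', one_smul, sub_neg_eq_add, Matrix.mul_assoc]
      abel
    · show J.mulVec (-((M * Jᵀ * (J * M * Jᵀ)⁻¹).mulVec r)) = -r
      rw [Matrix.mulVec_neg, Matrix.mulVec_mulVec, key2, Matrix.one_mulVec]
  · intro p l c h1 h2 h3
    have hl : l = μ • A.mulVec p := by
      have h2' : A.mulVec p = μ⁻¹ • l := sub_eq_zero.mp h2
      rw [h2', smul_smul, mul_inv_cancel₀ hμ.ne', one_smul]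
    have hSp : (H + μ • (Aᵀ * A)).mulVec p = -(Jᵀ.mulVec c) := by
      rw [hl] at h1
      rw [Matrix.mulVec_smul, Matrix.mulVec_mulVec] at h1
      rw [Matrix.add_mulVec, Matrix.smul_mulVec]
      exact eq_neg_of_add_eq_zero_left h1
    have hp : p = -((M * Jᵀ).mulVec c) := by
      have h4 : p = M.mulVec ((H + μ • (Aᵀ * A)).mulVec p) := by
        rw [Matrix.mulVec_mulVec, hMS, Matrix.one_mulVec]
      rw [h4, hSp, Matrix.mulVec_neg, Matrix.mulVec_mulVec]
    have h5 : (J * M * Jᵀ).mulVec c = r := by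
      rw [hp, Matrix.mulVec_neg, Matrix.mulVec_mulVec, ← Matrix.mul_assoc] at h3
      exact neg_injective h3
    have hc : c = Δκ := by
      show c = ((J * M * Jᵀ)⁻¹).mulVec r
      rw [← h5, Matrix.mulVec_mulVec, Matrix.nonsing_inv_mul _ hGu, Matrix.one_mulVec]
    have hp' : p = Δp := by
      show p = -((M * Jᵀ * (J * M * Jᵀ)⁻¹).mulVec r)
      rw [hp, hc]
      show -((M * Jᵀ).mulVec (((J * M * Jᵀ)⁻¹).mulVec r)) = _
      rw [Matrix.mulVec_mulVec]
    have hl' : l = Δl := by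
      show l = -(μ • ((A * M * Jᵀ * (J * M * Jᵀ)⁻¹).mulVec r))
      rw [hl, hp', show Δp = -((M * Jᵀ * (J * M * Jᵀ)⁻¹).mulVec r) from rfl]
      rw [Matrix.mulVec_neg, Matrix.mulVec_mulVec, smul_neg, ← Matrix.mul_assoc,
        ← Matrix.mul_assoc]
    exact ⟨hp', hl', hc⟩
end

section
/- Let H be an n×n real symmetric positive-definite matrix, A an m×n real matrix, J a k×n real matrix with full row rank (rank J = k), μ > 0, and let g ∈ ℝⁿ, λ ∈ ℝᵐ, w ∈ ℝᵐ, r ∈ ℝᵏ. Set M = (H + μ AᵀA)⁻¹. Suppose (p, λ', κ) ∈ ℝⁿ × ℝᵐ × ℝᵏ satisfies the KKT system of the coupled QP step: H·p + Aᵀ·(λ' − λ) + Jᵀ·κ = −(Aᵀλ + g), A·p − μ⁻¹·(λ' − λ) = −w, J·p = 0. Then the corrected triple p' = p − M Jᵀ (J M Jᵀ)⁻¹ r, λ'' = λ' − μ A M Jᵀ (J M Jᵀ)⁻¹ r, κ' = κ + (J M Jᵀ)⁻¹ r satisfies the KKT system of the second-order correction subproblem: H·p' + Aᵀ·(λ''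 − λ) + Jᵀ·κ' = −(Aᵀλ + g), A·p' − μ⁻¹·(λ'' − λ) = −w, J·p' = −r. -/
open Matrix

section Aux

variable {n m k : ℕ}

lemma aux_S_posdef (H : Matrix (Fin n) (Fin n) ℝ) (hH : H.PosDef)
    (A : Matrix (Fin m) (Fin n) ℝ) (μ : ℝ) (hμ : 0 < μ) :
    (H + μ • (Aᵀ * A)).PosDef := by
  refine hH.add_posSemidef ?_
  have h1 : (Aᵀ * A).PosSemidef := by
    simpa [conjTranspose_eq_transpose_of_trivial] using
      Matrix.posSemidef_conjTranspose_mul_self A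
  refine posSemidef_iff_dotProduct_mulVec.mpr ⟨?_, ?_⟩
  · show (μ • (Aᵀ * A))ᴴ = _
    rw [conjTranspose_smul, h1.1.eq]
    simp
  · intro x
    have := h1.dotProduct_mulVec_nonneg x
    simp only [Matrix.smul_mulVec, dotProduct_smul, smul_eq_mul]
    positivity

lemma aux_transpose_mulVec_injective (J : Matrix (Fin k) (Fin n) ℝ)
    (hJ : J.rank = k) : Function.Injective Jᵀ.mulVec := by
  have hr : Jᵀ.rank = k := by rw [Matrix.rank_transpose]; exact hJ
  have hrn : Module.finrank ℝ ↥(LinearMap.range Jᵀ.mulVecLin) = k := hr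
  have h := LinearMap.finrank_range_add_finrank_ker Jᵀ.mulVecLin
  rw [hrn] at h
  simp only [Module.finrank_fin_fun] at h
  have hker : Module.finrank ℝ ↥(LinearMap.ker Jᵀ.mulVecLin) = 0 := by omega
  have hbot : LinearMap.ker Jᵀ.mulVecLin = ⊥ :=
    Submodule.finrank_eq_zero.mp hker
  have hinj := LinearMap.ker_eq_bot.mp hbot
  intro x y hxy
  exact hinj hxy

lemma aux_JMJ_posdef (J : Matrix (Fin k) (Fin n) ℝ) (hJ : J.rank = k)
    (M : Matrix (Fin n) (Fin n) ℝ) (hM : M.PosDef) :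
    (J * M * Jᵀ).PosDef := by
  have hinj := aux_transpose_mulVec_injective J hJ
  have hMt : Mᵀ = M := by
    rw [← conjTranspose_eq_transpose_of_trivial, hM.1.eq]
  refine posDef_iff_dotProduct_mulVec.mpr ⟨?_, ?_⟩
  · show (J * M * Jᵀ)ᴴ = _
    simp [conjTranspose_mul, hMt, conjTranspose_eq_transpose_of_trivial,
      Matrix.mul_assoc]
  · intro x hx
    have hJx : Jᵀ.mulVec x ≠ 0 := by
      intro h
      exact hx (hinj (by simpa using h))
    have := hM.dotProduct_mulVec_pos hJx
    have hrw : x ⬝ᵥ (J * M * Jᵀ).mulVec x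
        = (Jᵀ.mulVec x) ⬝ᵥ M.mulVec (Jᵀ.mulVec x) := by
      rw [show (J * M * Jᵀ).mulVec x = J.mulVec (M.mulVec (Jᵀ.mulVec x)) by
            simp [Matrix.mulVec_mulVec, Matrix.mul_assoc],
        Matrix.dotProduct_mulVec, ← Matrix.mulVec_transpose]
    simpa [hrw] using this

end Aux

/-- If `(p, λ', κ)` solves the KKT system of the coupled QP step, then the
analytically corrected triple `(p', λ'', κ')` solves the KKT system of the
second-order correction subproblem. -/
theorem soc_correction_solves_kkt {n m k : ℕ}
    (H : Matrix (Fin n) (Fin n) ℝ) (hH : H.PosDef)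
    (A : Matrix (Fin m) (Fin n) ℝ)
    (J : Matrix (Fin k) (Fin n) ℝ) (hJ : J.rank = k)
    (μ : ℝ) (hμ : 0 < μ)
    (g : Fin n → ℝ) (lam : Fin m → ℝ) (w : Fin m → ℝ) (r : Fin k → ℝ)
    (p : Fin n → ℝ) (lam' : Fin m → ℝ) (κ : Fin k → ℝ)
    (hkkt1 : H.mulVec p + Aᵀ.mulVec (lam' - lam) + Jᵀ.mulVec κ
        = -(Aᵀ.mulVec lam + g))
    (hkkt2 : A.mulVec p - μ⁻¹ • (lam' - lam) = -w)
    (hkkt3 : J.mulVec p = 0) :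
    let M := (H + μ • (Aᵀ * A))⁻¹
    let p' : Fin n → ℝ := p - (M * Jᵀ * (J * M * Jᵀ)⁻¹).mulVec r
    let lam'' : Fin m → ℝ := lam' - μ • ((A * M * Jᵀ * (J * M * Jᵀ)⁻¹).mulVec r)
    let κ' : Fin k → ℝ := κ + ((J * M * Jᵀ)⁻¹).mulVec r
    H.mulVec p' + Aᵀ.mulVec (lam'' - lam) + Jᵀ.mulVec κ'
        = -(Aᵀ.mulVec lam + g) ∧
      A.mulVec p' - μ⁻¹ • (lam'' - lam) = -w ∧
      J.mulVec p' = -r := by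
  intro M p' lam'' κ'
  have hS : (H + μ • (Aᵀ * A)).PosDef := aux_S_posdef H hH A μ hμ
  have hM : M.PosDef := hS.inv
  have hSM : (H + μ • (Aᵀ * A)) * M = 1 :=
    Matrix.mul_nonsing_inv _ hS.det_pos.ne'.isUnit
  have hJMJ : (J * M * Jᵀ).PosDef := aux_JMJ_posdef J hJ M hM
  have hXinv : J * M * Jᵀ * (J * M * Jᵀ)⁻¹ = 1 :=
    Matrix.mul_nonsing_inv _ hJMJ.det_pos.ne'.isUnit
  set X := (J * M * Jᵀ)⁻¹ with hXdef
  set y := X.mulVec r with hy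
  set z := Jᵀ.mulVec y with hz
  set c := M.mulVec z with hc
  -- rewrite the correction vectors
  have hcorr : (M * Jᵀ * X).mulVec r = c := by
    rw [hc, hz, hy, Matrix.mulVec_mulVec, Matrix.mulVec_mulVec]
  have hAcorr : (A * M * Jᵀ * X).mulVec r = A.mulVec c := by
    rw [← hcorr, Matrix.mulVec_mulVec]
    simp only [Matrix.mul_assoc]
  -- J *ᵥ c = r
  have hJc : J.mulVec c = r := by
    rw [hc, hz, hy]
    simp only [Matrix.mulVec_mulVec]
    rw [← Matrix.mul_assoc, ← Matrix.mul_assoc, hXinv, Matrix.one_mulVec]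
  -- the key identity from (H + μAᵀA) M = 1
  have hkey : H.mulVec c + μ • Aᵀ.mulVec (A.mulVec c) = z := by
    have h0 : (H + μ • (Aᵀ * A)).mulVec c = z := by
      rw [hc, Matrix.mulVec_mulVec, hSM, Matrix.one_mulVec]
    calc H.mulVec c + μ • Aᵀ.mulVec (A.mulVec c)
        = (H + μ • (Aᵀ * A)).mulVec c := by
          rw [Matrix.add_mulVec, Matrix.smul_mulVec]
          simp [Matrix.mulVec_mulVec]
      _ = z := h0
  refine ⟨?_, ?_, ?_⟩
  · -- first KKT equation
    show H.mulVec (p - (M * Jᵀ * X).mulVec r)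
        + Aᵀ.mulVec (lam' - μ • ((A * M * Jᵀ * X).mulVec r) - lam)
        + Jᵀ.mulVec (κ + X.mulVec r) = -(Aᵀ.mulVec lam + g)
    rw [hcorr, hAcorr, ← hy]
    have hHc : H.mulVec c = z - μ • Aᵀ.mulVec (A.mulVec c) := by
      rw [← hkey]; abel
    rw [Matrix.mulVec_sub, hHc, sub_right_comm, Matrix.mulVec_sub,
      Matrix.mulVec_smul, Matrix.mulVec_add, ← hz, ← hkkt1]
    abel
  · -- second KKT equation
    show A.mulVec (p - (M * Jᵀ * X).mulVec r)
        - μ⁻¹ • (lam' - μ • ((A * M * Jᵀ * X).mulVec r) - lam) = -w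
    rw [hcorr, hAcorr, Matrix.mulVec_sub, sub_right_comm lam', smul_sub,
      smul_smul, inv_mul_cancel₀ hμ.ne', one_smul, ← hkkt2]
    abel
  · -- third KKT equation
    show J.mulVec (p - (M * Jᵀ * X).mulVec r) = -r
    rw [hcorr, Matrix.mulVec_sub, hkkt3, hJc, zero_sub]
end

section
/- Let H be an n×n real symmetric positive-definite matrix, A an m×n real matrix, μ > 0, and let h : ℝⁿ → ℝᵏ be twice continuously differentiable on an open convex set U ⊆ ℝⁿ with ‖D²h(y)‖ ≤ K for all y ∈ U. Let x ∈ U and p ∈ ℝⁿ satisfy x + p ∈ U, h(x) = 0, and Dh(x)·p = 0. Let J be the k×n matrix representing Dh(x), assume J has full row rank (rank J = k), set M = (H + μ AᵀA)⁻¹ and r = h(x + p). Then the second-order correction steps Δp = −M Jᵀ (J M Jᵀ)⁻¹ r and Δλ = μ A Δp satisfy ‖Δp‖ ≤ (K/2)·‖M Jᵀ (J M Jᵀ)⁻¹‖·‖p‖² and ‖Δλ‖ ≤ (μ K/2)·‖A‖·‖M Jᵀ (J M Jᵀ)⁻¹‖·‖p‖², where matrix norms are operator norms induced by the Euclidean norm.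 -/
open Matrix

/-- The operator norm of a real matrix, induced by the Euclidean norms. -/
noncomputable def euclideanOpNorm {a b : ℕ} (X : Matrix (Fin a) (Fin b) ℝ) : ℝ :=
  ‖LinearMap.toContinuousLinearMap (Matrix.toEuclideanLin X)‖


lemma euclid_mulVec_le {a b : ℕ} (X : Matrix (Fin a) (Fin b) ℝ) (v : Fin b → ℝ) :
    ‖(EuclideanSpace.equiv (Fin a) ℝ).symm (X.mulVec v)‖
      ≤ euclideanOpNorm X * ‖(EuclideanSpace.equiv (Fin b) ℝ).symm v‖ := by
  have h1 : (EuclideanSpace.equiv (Fin a) ℝ).symm (X.mulVec v)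
      = LinearMap.toContinuousLinearMap (Matrix.toEuclideanLin X)
        ((EuclideanSpace.equiv (Fin b) ℝ).symm v) := rfl
  rw [h1]
  exact (LinearMap.toContinuousLinearMap (Matrix.toEuclideanLin X)).le_opNorm _

lemma taylor_quad {E F : Type*} [NormedAddCommGroup E] [NormedSpace ℝ E]
    [NormedAddCommGroup F] [NormedSpace ℝ F]
    (h : E → F) (U : Set E) (hUopen : IsOpen U) (hUconv : Convex ℝ U)
    (hh : ContDiffOn ℝ 2 h U) (K : ℝ)
    (hbound : ∀ y ∈ U, ‖iteratedFDerivWithin ℝ 2 h U y‖ ≤ K)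
    (x p : E) (hx : x ∈ U) (hxp : x + p ∈ U)
    (hx0 : h x = 0) (hlin : fderivWithin ℝ h U x p = 0) :
    ‖h (x + p)‖ ≤ K / 2 * ‖p‖ ^ 2 := by
  set G := iteratedFDerivWithin ℝ 1 h U with hG
  set Fd := fderivWithin ℝ h U with hFd
  have hud : UniqueDiffOn ℝ U := hUopen.uniqueDiffOn
  have hdiffG : DifferentiableOn ℝ G U :=
    hh.differentiableOn_iteratedFDerivWithin (by norm_num) hud
  have hGlip : ∀ y ∈ U, ∀ z ∈ U, ‖G y - G z‖ ≤ K * ‖y - z‖ := by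
    intro y hy z hz
    refine hUconv.norm_image_sub_le_of_norm_fderivWithin_le hdiffG ?_ hz hy
    intro w hw
    rw [hG, norm_fderivWithin_iteratedFDerivWithin]
    exact hbound w hw
  have hFG : ∀ y ∈ U, ∀ z ∈ U, ‖Fd y - Fd z‖ ≤ K * ‖y - z‖ := by
    intro y hy z hz
    have he : ∀ w ∈ U, (continuousMultilinearCurryFin1 ℝ E F) (G w) = Fd w := by
      intro w hw
      ext u
      simp [hG, hFd, iteratedFDerivWithin_one_apply (hud w hw), Fin.snoc]
    calc ‖Fd y - Fd z‖
        = ‖(continuousMultilinearCurryFin1 ℝ E F) (G y - G z)‖ := by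
          rw [map_sub, he y hy, he z hz]
      _ = ‖G y - G z‖ := (continuousMultilinearCurryFin1 ℝ E F).norm_map _
      _ ≤ K * ‖y - z‖ := hGlip y hy z hz
  have hmem : ∀ t ∈ Set.Icc (0:ℝ) 1, x + t • p ∈ U := by
    intro t ht
    have : x + t • p = (1 - t) • x + t • (x + p) := by
      rw [smul_add]; module
    rw [this]
    exact hUconv hx hxp (by linarith [ht.2]) ht.1 (by ring)
  have hderiv : ∀ t ∈ Set.Icc (0:ℝ) 1,
      HasDerivAt (fun s : ℝ => h (x + s • p)) (Fd (x + t • p) p) t := by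
    intro t ht
    have hy := hmem t ht
    have hdh : DifferentiableAt ℝ h (x + t • p) :=
      (hh.differentiableOn (by norm_num) _ hy).differentiableAt (hUopen.mem_nhds hy)
    have hfd : HasFDerivAt h (Fd (x + t • p)) (x + t • p) := by
      rw [hFd, fderivWithin_of_isOpen hUopen hy]
      exact hdh.hasFDerivAt
    have hγ : HasDerivAt (fun s : ℝ => x + s • p) p t := by
      simpa using ((hasDerivAt_id t).smul_const p).const_add x
    exact hfd.comp_hasDerivAt t hγ
  have key : ∀ t ∈ Set.Icc (0:ℝ) 1,
      ‖h (x + t • p)‖ ≤ K / 2 * ‖p‖ ^ 2 * t ^ 2 := by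
    refine image_norm_le_of_norm_deriv_right_le_deriv_boundary
      (f := fun s : ℝ => h (x + s • p)) (f' := fun s => Fd (x + s • p) p)
      (B := fun t => K / 2 * ‖p‖ ^ 2 * t ^ 2) (B' := fun t => K * ‖p‖ ^ 2 * t)
      ?_ ?_ ?_ ?_ ?_
    · intro t ht
      exact (hderiv t ht).continuousAt.continuousWithinAt
    · intro t ht
      exact (hderiv t (Set.Ico_subset_Icc_self ht)).hasDerivWithinAt
    · simp [hx0]
    · intro t
      have := ((hasDerivAt_pow 2 t).const_mul (K / 2 * ‖p‖ ^ 2))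
      exact this.congr_deriv (by rw [show (2:ℕ) - 1 = 1 from rfl]; push_cast; ring)
    · intro t ht
      have hy := hmem t (Set.Ico_subset_Icc_self ht)
      show ‖Fd (x + t • p) p‖ ≤ K * ‖p‖ ^ 2 * t
      have h0 : Fd (x + t • p) p = (Fd (x + t • p) - Fd x) p := by
        simp [hlin]
      rw [h0]
      calc ‖(Fd (x + t • p) - Fd x) p‖
          ≤ ‖Fd (x + t • p) - Fd x‖ * ‖p‖ := (Fd (x + t • p) - Fd x).le_opNorm p
        _ ≤ K * ‖x + t • p - x‖ * ‖p‖ := by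
            have := hFG (x + t • p) hy x hx
            exact mul_le_mul_of_nonneg_right this (norm_nonneg p)
        _ = K * ‖p‖ ^ 2 * t := by
            have : ‖x + t • p - x‖ = t * ‖p‖ := by
              rw [add_sub_cancel_left, norm_smul, Real.norm_eq_abs,
                abs_of_nonneg ht.1]
            rw [this]; ring
  have := key 1 (by norm_num)
  simpa using this

/-- Quadratic bound on the ALADIN second-order correction steps
`Δp = −M Jᵀ (J M Jᵀ)⁻¹ r` and `Δλ = μ A Δp`, where `r = h(x + p)`,
`M = (H + μ AᵀA)⁻¹` and `J` represents `Dh(x)`. -/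
theorem soc_step_quadratic_bound {n m k : ℕ}
    (H : Matrix (Fin n) (Fin n) ℝ) (hH : H.PosDef)
    (A : Matrix (Fin m) (Fin n) ℝ) (μ : ℝ) (hμ : 0 < μ)
    (h : EuclideanSpace ℝ (Fin n) → EuclideanSpace ℝ (Fin k))
    (U : Set (EuclideanSpace ℝ (Fin n))) (hUopen : IsOpen U) (hUconv : Convex ℝ U)
    (hh : ContDiffOn ℝ 2 h U)
    (K : ℝ)
    (hbound : ∀ y ∈ U, ‖iteratedFDerivWithin ℝ 2 h U y‖ ≤ K)
    (x p : EuclideanSpace ℝ (Fin n)) (hx : x ∈ U) (hxp : x + p ∈ U)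
    (hx0 : h x = 0) (hlin : fderivWithin ℝ h U x p = 0)
    (J : Matrix (Fin k) (Fin n) ℝ)
    (hJ : ∀ v : EuclideanSpace ℝ (Fin n),
      fderivWithin ℝ h U x v
        = (EuclideanSpace.equiv (Fin k) ℝ).symm
            (J.mulVec (EuclideanSpace.equiv (Fin n) ℝ v)))
    (hrank : J.rank = k) :
    let M := (H + μ • (Aᵀ * A))⁻¹
    let r : Fin k → ℝ := EuclideanSpace.equiv (Fin k) ℝ (h (x + p))
    let Δp : Fin n → ℝ := -((M * Jᵀ * (J * M * Jᵀ)⁻¹).mulVec r)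
    let Δl : Fin m → ℝ := μ • A.mulVec Δp
    ‖(EuclideanSpace.equiv (Fin n) ℝ).symm Δp‖
        ≤ K / 2 * euclideanOpNorm (M * Jᵀ * (J * M * Jᵀ)⁻¹) * ‖p‖ ^ 2 ∧
      ‖(EuclideanSpace.equiv (Fin m) ℝ).symm Δl‖
        ≤ μ * K / 2 * euclideanOpNorm A
            * euclideanOpNorm (M * Jᵀ * (J * M * Jᵀ)⁻¹) * ‖p‖ ^ 2 := by
  
  intro M r Δp Δl
  set X := M * Jᵀ * (J * M * Jᵀ)⁻¹ with hX
  have hK : (0:ℝ) ≤ K := le_trans (norm_nonneg _) (hbound x hx)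
  have hrem : ‖h (x + p)‖ ≤ K / 2 * ‖p‖ ^ 2 :=
    taylor_quad h U hUopen hUconv hh K hbound x p hx hxp hx0 hlin
  have hrsymm : (EuclideanSpace.equiv (Fin k) ℝ).symm r = h (x + p) := by
    simp [r]
  have hXnn : (0:ℝ) ≤ euclideanOpNorm X := norm_nonneg _
  have hAnn : (0:ℝ) ≤ euclideanOpNorm A := norm_nonneg _
  have h1 : ‖(EuclideanSpace.equiv (Fin n) ℝ).symm Δp‖
      ≤ K / 2 * euclideanOpNorm X * ‖p‖ ^ 2 := by
    have e1 : (EuclideanSpace.equiv (Fin n) ℝ).symm Δp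
        = -((EuclideanSpace.equiv (Fin n) ℝ).symm (X.mulVec r)) := by
      show (EuclideanSpace.equiv (Fin n) ℝ).symm (-(X.mulVec r)) = _
      exact map_neg _ _
    rw [e1, norm_neg]
    calc ‖(EuclideanSpace.equiv (Fin n) ℝ).symm (X.mulVec r)‖
        ≤ euclideanOpNorm X * ‖(EuclideanSpace.equiv (Fin k) ℝ).symm r‖ :=
          euclid_mulVec_le X r
      _ ≤ euclideanOpNorm X * (K / 2 * ‖p‖ ^ 2) := by
          rw [hrsymm]; exact mul_le_mul_of_nonneg_left hrem hXnn
      _ = K / 2 * euclideanOpNorm X * ‖p‖ ^ 2 := by ring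
  refine ⟨h1, ?_⟩
  have e2 : (EuclideanSpace.equiv (Fin m) ℝ).symm Δl
      = μ • ((EuclideanSpace.equiv (Fin m) ℝ).symm (A.mulVec Δp)) := by
    show (EuclideanSpace.equiv (Fin m) ℝ).symm (μ • A.mulVec Δp) = _
    exact map_smul _ _ _
  rw [e2, norm_smul, Real.norm_eq_abs, abs_of_pos hμ]
  calc μ * ‖(EuclideanSpace.equiv (Fin m) ℝ).symm (A.mulVec Δp)‖
      ≤ μ * (euclideanOpNorm A * ‖(EuclideanSpace.equiv (Fin n) ℝ).symm Δp‖) :=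
        mul_le_mul_of_nonneg_left (euclid_mulVec_le A Δp) hμ.le
    _ ≤ μ * (euclideanOpNorm A * (K / 2 * euclideanOpNorm X * ‖p‖ ^ 2)) := by
        refine mul_le_mul_of_nonneg_left (mul_le_mul_of_nonneg_left h1 hAnn) hμ.le
    _ = μ * K / 2 * euclideanOpNorm A * euclideanOpNorm X * ‖p‖ ^ 2 := by ring
end
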